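/- Let φ : [0,∞) → (0,1] satisfy φ(ξ) → 0 as ξ → ∞. Then there exists a dense G_δ set A ⊆ [0,1] such that for all t ∈ A, limsup_{ξ → ∞} |μ̂_t(ξ)| / φ(ξ) > 0. -/

import Mathlib

open MeasureTheory Filter Set
open scoped ENNReal NNReal

/-- The Fourier transform of a measure on `ℝ`: `μ̂(ξ) = ∫ e^{2πiξx} dμ(x)`. -/
noncomputable def ft (μ : Measure ℝ) (ξ : ℝ) : ℂ :=
  ∫ x, Complex.exp (((2 * Real.pi * ξ * x : ℝ) : ℂ) * Complex.I) ∂μ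

/-- `μ_t` is invariant for the IFS `{x/10, (x+1)/10, (x+t)/10}` with weights `(1/3,1/3,1/3)`. -/
def muInv (t : ℝ) (μ : Measure ℝ) : Prop :=
  μ = (3 : ℝ≥0∞)⁻¹ • (Measure.map (fun x : ℝ => x / 10) μ +
    Measure.map (fun x : ℝ => (x + 1) / 10) μ + Measure.map (fun x : ℝ => (x + t) / 10) μ)

/-! ### Auxiliary definitions -/

noncomputable def ee (θ : ℝ) : ℂ := Complex.exp (((2 * Real.pi * θ : ℝ) : ℂ) * Complex.I)

noncomputable def gfun (t ξ : ℝ) : ℂ :=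
  (((1/3 : ℝ)) : ℂ) * (1 + ee (ξ / 10) + ee (ξ * t / 10))

lemma ee_add (a b : ℝ) : ee (a + b) = ee a * ee b := by
  simp only [ee, ← Complex.exp_add]; congr 1; push_cast; ring

lemma abs_ee (θ : ℝ) : ‖ee θ‖ = 1 := Complex.norm_exp_ofReal_mul_I _

lemma ee_re (θ : ℝ) : (ee θ).re = Real.cos (2 * Real.pi * θ) := Complex.exp_ofReal_mul_I_re _

lemma ee_int (n : ℤ) : ee (n : ℝ) = 1 := by
  rw [ee, show (((2 * Real.pi * (n:ℝ) : ℝ)) : ℂ) * Complex.I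
      = (n : ℂ) * (2 * (Real.pi : ℂ) * Complex.I) by push_cast; ring,
    Complex.exp_int_mul_two_pi_mul_I]

lemma ee_int_add (n : ℤ) (x : ℝ) : ee ((n : ℝ) + x) = ee x := by
  rw [ee_add, ee_int, one_mul]

lemma ft_integrand_cont (ξ : ℝ) :
    Continuous fun x : ℝ => Complex.exp (((2 * Real.pi * ξ * x : ℝ) : ℂ) * Complex.I) := by
  fun_prop

lemma integrable_ft_integrand (μ : Measure ℝ) [IsFiniteMeasure μ] (ξ : ℝ) :
    Integrable (fun x : ℝ => Complex.exp (((2 * Real.pi * ξ * x : ℝ) : ℂ) * Complex.I)) μ := by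
  refine ⟨(ft_integrand_cont ξ).aestronglyMeasurable,
    HasFiniteIntegral.of_bounded (C := 1) (Eventually.of_forall fun x => ?_)⟩
  rw [Complex.norm_exp_ofReal_mul_I]

lemma ft_cont (μ : Measure ℝ) [IsFiniteMeasure μ] : Continuous (ft μ) := by
  refine continuous_of_dominated (bound := fun _ => (1:ℝ))
    (fun ξ => (ft_integrand_cont ξ).aestronglyMeasurable)
    (fun ξ => Eventually.of_forall fun x => ?_) (integrable_const 1)
    (Eventually.of_forall fun x => ?_)
  · rw [Complex.norm_exp_ofReal_mul_I]
  · fun_prop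

lemma ft_zero (μ : Measure ℝ) [IsProbabilityMeasure μ] : ft μ 0 = 1 := by
  simp [ft]

lemma map_integral (μ : Measure ℝ) [IsProbabilityMeasure μ] (ξ a : ℝ) :
    (∫ x, Complex.exp (((2 * Real.pi * ξ * x : ℝ) : ℂ) * Complex.I)
      ∂(Measure.map (fun x : ℝ => (x + a) / 10) μ)) = ee (ξ * a / 10) * ft μ (ξ / 10) := by
  rw [integral_map ((measurable_add_const a).div_const 10).aemeasurable
    (ft_integrand_cont ξ).aestronglyMeasurable]
  have hpt : ∀ x : ℝ, Complex.exp (((2 * Real.pi * ξ * ((x + a) / 10) : ℝ) : ℂ) * Complex.I)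
      = ee (ξ * a / 10) * Complex.exp (((2 * Real.pi * (ξ / 10) * x : ℝ) : ℂ) * Complex.I) := by
    intro x
    rw [ee, ← Complex.exp_add]
    congr 1
    push_cast
    ring
  simp_rw [hpt, integral_const_mul]
  rfl

lemma map_integral0 (μ : Measure ℝ) [IsProbabilityMeasure μ] (ξ : ℝ) :
    (∫ x, Complex.exp (((2 * Real.pi * ξ * x : ℝ) : ℂ) * Complex.I)
      ∂(Measure.map (fun x : ℝ => x / 10) μ)) = ft μ (ξ / 10) := by
  rw [integral_map (measurable_id'.div_const 10).aemeasurable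
    (ft_integrand_cont ξ).aestronglyMeasurable]
  have hpt : ∀ x : ℝ, Complex.exp (((2 * Real.pi * ξ * (x / 10) : ℝ) : ℂ) * Complex.I)
      = Complex.exp (((2 * Real.pi * (ξ / 10) * x : ℝ) : ℂ) * Complex.I) := by
    intro x
    have h : 2 * Real.pi * ξ * (x / 10) = 2 * Real.pi * (ξ / 10) * x := by ring
    rw [h]
  simp_rw [hpt]
  rfl

lemma ft_rec {t : ℝ} {μ : Measure ℝ} [IsProbabilityMeasure μ] (h : muInv t μ) (ξ : ℝ) :
    ft μ ξ = gfun t ξ * ft μ (ξ / 10) := by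
  haveI i0 : IsProbabilityMeasure (Measure.map (fun x : ℝ => x / 10) μ) :=
    Measure.isProbabilityMeasure_map (measurable_id.div_const 10).aemeasurable
  haveI i1 : IsProbabilityMeasure (Measure.map (fun x : ℝ => (x + 1) / 10) μ) :=
    Measure.isProbabilityMeasure_map ((measurable_id.add_const 1).div_const 10).aemeasurable
  haveI i2 : IsProbabilityMeasure (Measure.map (fun x : ℝ => (x + t) / 10) μ) :=
    Measure.isProbabilityMeasure_map ((measurable_id.add_const t).div_const 10).aemeasurable
  conv_lhs => rw [h]
  show (∫ x, Complex.exp (((2 * Real.pi * ξ * x : ℝ) : ℂ) * Complex.I)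
      ∂((3 : ℝ≥0∞)⁻¹ • (Measure.map (fun x : ℝ => x / 10) μ +
        Measure.map (fun x : ℝ => (x + 1) / 10) μ +
        Measure.map (fun x : ℝ => (x + t) / 10) μ))) = _
  rw [integral_smul_measure,
    integral_add_measure ((integrable_ft_integrand _ ξ).add_measure (integrable_ft_integrand _ ξ))
      (integrable_ft_integrand _ ξ),
    integral_add_measure (integrable_ft_integrand _ ξ) (integrable_ft_integrand _ ξ),
    map_integral0 μ ξ, map_integral μ ξ 1, map_integral μ ξ t]
  have h3 : ((3 : ℝ≥0∞)⁻¹).toReal = 1/3 := by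
    rw [ENNReal.toReal_inv]; norm_num
  rw [h3, Complex.real_smul, gfun]
  have h1 : ee (ξ * 1 / 10) = ee (ξ / 10) := by rw [show ξ * 1 / 10 = ξ / 10 by ring]
  rw [h1]
  push_cast
  ring

lemma ft_iter {t : ℝ} {μ : Measure ℝ} [IsProbabilityMeasure μ] (h : muInv t μ) (ξ : ℝ) (j : ℕ) :
    ft μ ξ = (∏ i ∈ Finset.range j, gfun t (ξ / 10 ^ i)) * ft μ (ξ / 10 ^ j) := by
  induction j with
  | zero => simp
  | succ n ih =>
    rw [ih, Finset.prod_range_succ, ft_rec h (ξ / 10 ^ n),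
      show ξ / 10 ^ n / 10 = ξ / 10 ^ (n+1) by rw [div_div, ← pow_succ]]
    ring

lemma abs_gfun_ge_half {t : ℝ} (ht0 : 0 ≤ t) (ht1 : t ≤ 1) {ξ : ℝ} (hξ0 : 0 ≤ ξ)
    (hξ1 : ξ ≤ 1) : 1/2 ≤ ‖gfun t ξ‖ := by
  have h1 : ∀ θ : ℝ, 0 ≤ θ → θ ≤ 1/10 → (0.68 : ℝ) ≤ (ee θ).re := by
    intro θ hθ0 hθ1
    rw [ee_re]
    have hπ0 := Real.pi_pos
    have hπθ : Real.pi * θ ≤ 2/5 := by nlinarith [Real.pi_le_four]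
    have hπθ0 : (0:ℝ) ≤ Real.pi * θ := by positivity
    nlinarith [Real.one_sub_sq_div_two_le_cos (x := 2 * Real.pi * θ), hπθ, hπθ0]
  have hre : (1/2 : ℝ) ≤ (gfun t ξ).re := by
    rw [gfun, Complex.re_ofReal_mul]
    have e1 := h1 (ξ/10) (by linarith) (by linarith)
    have e2 := h1 (ξ*t/10) (by positivity) (by nlinarith)
    simp only [Complex.add_re, Complex.one_re]
    linarith
  exact hre.trans (Complex.re_le_norm _)

lemma abs_gfun_ge_third (t ξ : ℝ) (c : ℤ) (hc : ξ / 10 = (c : ℝ)) :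
    1/3 ≤ ‖gfun t ξ‖ := by
  have hre : (1/3 : ℝ) ≤ (gfun t ξ).re := by
    rw [gfun, hc, ee_int, Complex.re_ofReal_mul]
    simp only [Complex.add_re, Complex.one_re, ee_re]
    have := Real.neg_one_le_cos (2 * Real.pi * (ξ * t / 10))
    linarith
  exact hre.trans (Complex.re_le_norm _)

lemma abs_gfun_ge_sq (t ξ : ℝ) (c : ℤ) (hc : ξ / 10 = (c : ℝ)) (n : ℤ) (ε : ℝ)
    (hn : ξ * t / 10 = (n : ℝ) + ε) : 1 - 11 * ε^2 ≤ ‖gfun t ξ‖ := by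
  have hre : 1 - 11 * ε^2 ≤ (gfun t ξ).re := by
    rw [gfun, hc, ee_int, hn, ee_int_add, Complex.re_ofReal_mul]
    simp only [Complex.add_re, Complex.one_re, ee_re]
    have hc1 := Real.one_sub_sq_div_two_le_cos (x := 2 * Real.pi * ε)
    have hπ2 : Real.pi^2 ≤ 16 := by nlinarith [Real.pi_le_four, Real.pi_pos]
    nlinarith [sq_nonneg ε, hc1, hπ2, mul_le_mul_of_nonneg_right hπ2 (sq_nonneg ε)]
  exact hre.trans (Complex.re_le_norm _)

lemma prod_one_sub_ge (N : ℕ) (a : ℕ → ℝ) (h0 : ∀ i, i < N → 0 ≤ a i)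
    (h1 : ∀ i, i < N → a i ≤ 1) :
    1 - ∑ i ∈ Finset.range N, a i ≤ ∏ i ∈ Finset.range N, (1 - a i) := by
  induction N with
  | zero => simp
  | succ n ih =>
    have h0' : ∀ i, i < n → 0 ≤ a i := fun i hi => h0 i (by omega)
    have h1' : ∀ i, i < n → a i ≤ 1 := fun i hi => h1 i (by omega)
    have ih' := ih h0' h1'
    rw [Finset.sum_range_succ, Finset.prod_range_succ]
    have hp : (0:ℝ) ≤ ∏ i ∈ Finset.range n, (1 - a i) :=
      Finset.prod_nonneg fun i hi => by linarith [h1' i (Finset.mem_range.mp hi)]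
    have hS : (0:ℝ) ≤ ∑ i ∈ Finset.range n, a i :=
      Finset.sum_nonneg fun i hi => h0' i (Finset.mem_range.mp hi)
    nlinarith [h0 n (by omega), h1 n (by omega)]

lemma ft_anchor (μ : Measure ℝ) [IsProbabilityMeasure μ] :
    ∃ M : ℕ, 1/2 ≤ ‖ft μ (1 / 10 ^ M)‖ := by
  have hc : Continuous (ft μ) := ft_cont μ
  have htd : Tendsto (ft μ) (nhds 0) (nhds 1) := by
    rw [← ft_zero μ]; exact hc.continuousAt
  have h2 : ∀ᶠ ξ : ℝ in nhds 0, dist (ft μ ξ) 1 < 1/2 := by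
    have := htd (Metric.ball_mem_nhds 1 (by norm_num : (0:ℝ) < 1/2))
    filter_upwards [this] with ξ hξ using hξ
  obtain ⟨δ, hδ0, hδ⟩ := Metric.eventually_nhds_iff_ball.mp h2
  obtain ⟨M, hM⟩ := exists_pow_lt_of_lt_one hδ0 (show (1:ℝ)/10 < 1 by norm_num)
  refine ⟨M, ?_⟩
  have hmem : ((1:ℝ)/10)^M ∈ Metric.ball (0:ℝ) δ := by
    rw [Metric.mem_ball, Real.dist_eq, sub_zero, abs_of_pos (by positivity)]
    exact hM
  have hd := hδ _ hmem
  have hd' : ‖ft μ ((1/10 : ℝ)^M) - 1‖ < 1/2 := by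
    rw [← dist_eq_norm]; exact hd
  have htri : ‖(1:ℂ)‖ - ‖(1:ℂ) - ft μ ((1/10:ℝ)^M)‖ ≤ ‖ft μ ((1/10:ℝ)^M)‖ := by
    have := norm_sub_norm_le (1:ℂ) (1 - ft μ ((1/10:ℝ)^M))
    simpa using this
  rw [norm_sub_rev] at htri
  have h1 : ((1:ℝ)/10)^M = 1 / 10^M := by rw [div_pow, one_pow]
  rw [← h1]
  have hn1 : ‖(1:ℂ)‖ = 1 := norm_one
  linarith

set_option maxHeartbeats 1000000 in
lemma main_est {t : ℝ} (ht0 : 0 ≤ t) (ht1 : t ≤ 1) {μ : Measure ℝ} [IsProbabilityMeasure μ]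
    (h : muInv t μ) (M : ℕ) (hM : 1/2 ≤ ‖ft μ (1 / 10 ^ M)‖)
    (a m N : ℕ) (hdist : |t - (a:ℝ)/10^m| ≤ (1/10 : ℝ)^(m+N+1)) :
    (1/2 : ℝ)^(M+2) * (1/3 : ℝ)^m ≤ ‖ft μ ((10:ℝ)^(m+N))‖ := by
  set δ : ℝ := t - (a:ℝ)/10^m with hδdef
  have ht : t = (a:ℝ)/10^m + δ := by rw [hδdef]; ring
  clear_value δ
  -- Stage 3 bound
  have P3 : (1/2 : ℝ)^M ≤ ∏ i ∈ Finset.range M, ‖gfun t ((1:ℝ) / 10 ^ i)‖ := by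
    calc (1/2:ℝ)^M = ∏ _i ∈ Finset.range M, (1/2:ℝ) := by
          rw [Finset.prod_const, Finset.card_range]
      _ ≤ _ := by
          refine Finset.prod_le_prod (fun i _ => by norm_num) (fun i _ => ?_)
          refine abs_gfun_ge_half ht0 ht1 (by positivity) ?_
          rw [div_le_one (by positivity)]
          calc (1:ℝ) = 10^0 := by norm_num
            _ ≤ 10^i := pow_le_pow_right₀ (by norm_num) (Nat.zero_le i)
  -- Stage 2 bound
  have P2 : (1/3 : ℝ)^m ≤ ∏ i ∈ Finset.range m, ‖gfun t ((10:ℝ)^m / 10 ^ i)‖ := by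
    calc (1/3:ℝ)^m = ∏ _i ∈ Finset.range m, (1/3:ℝ) := by
          rw [Finset.prod_const, Finset.card_range]
      _ ≤ _ := by
          refine Finset.prod_le_prod (fun i _ => by norm_num) (fun i hi => ?_)
          have hi' : i < m := Finset.mem_range.mp hi
          have hξ : (10:ℝ)^m / 10^i = 10^((m-1-i)+1) := by
            rw [div_eq_iff (by positivity : (10:ℝ)^i ≠ 0), ← pow_add]
            congr 1
            omega
          rw [hξ]
          refine abs_gfun_ge_third t _ ((10:ℤ)^(m-1-i)) ?_
          push_cast
          rw [pow_succ]
          field_simp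
  -- Stage 1 bound
  have P1 : (1/2 : ℝ) ≤ ∏ i ∈ Finset.range N,
      ‖gfun t ((10:ℝ)^(m+N) / 10 ^ i)‖ := by
    have hδ2 : δ^2 ≤ ((1/10:ℝ)^(m+N+1))^2 := by
      have h1 := abs_le.mp hdist
      nlinarith [h1.1, h1.2]
    have hterm : ∀ i : ℕ, i < N → (δ * 10^(m+N-1-i))^2 ≤ (1/10000 : ℝ) * (1/2)^i := by
      intro i hi
      have key : ((1/10:ℝ))^(m+N+1) * 10^(m+N-1-i) = (1/10)^(i+2) := by
        rw [one_div_pow, one_div_pow, div_mul_eq_mul_div, one_mul,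
          div_eq_div_iff (by positivity) (by positivity), one_mul, ← pow_add]
        congr 1
        omega
      have h2 : (δ * 10^(m+N-1-i))^2 ≤ ((1/10:ℝ)^(i+2))^2 := by
        rw [← key, mul_pow, mul_pow]
        have hp : (0:ℝ) ≤ ((10:ℝ)^(m+N-1-i))^2 := by positivity
        nlinarith [hδ2, hp]
      refine h2.trans ?_
      have : ((1/10:ℝ)^(i+2))^2 = (1/10000) * ((1/100:ℝ))^i := by
        rw [← pow_mul]
        rw [show (1/10000 : ℝ) = (1/10)^4 by norm_num, show ((1/100:ℝ)) = (1/10)^2 by norm_num,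
          ← pow_mul, ← pow_add]
        congr 1
        omega
      rw [this]
      have : ((1/100:ℝ))^i ≤ (1/2)^i := by
        exact pow_le_pow_left₀ (by norm_num) (by norm_num) i
      nlinarith
    have hfac : ∀ i ∈ Finset.range N,
        1 - 11 * (δ * 10^(m+N-1-i))^2 ≤ ‖gfun t ((10:ℝ)^(m+N) / 10^i)‖ := by
      intro i hi
      have hi' : i < N := Finset.mem_range.mp hi
      have hξ : (10:ℝ)^(m+N) / 10^i = 10^((m+N-1-i)+1) := by
        rw [div_eq_iff (by positivity : (10:ℝ)^i ≠ 0), ← pow_add]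
        congr 1
        omega
      rw [hξ]
      set k := m+N-1-i with hkdef
      have hkm : m ≤ k := by omega
      refine abs_gfun_ge_sq t _ ((10:ℤ)^k) ?_ ((a:ℤ) * 10^(k-m)) (δ * 10^k) ?_
      · push_cast
        rw [pow_succ]
        field_simp
      · push_cast
        have h1 : (10:ℝ)^(k+1) * t / 10 = t * 10^k := by rw [pow_succ]; ring
        have h2 : ((a:ℝ)/10^m) * 10^k = (a:ℝ) * 10^(k-m) := by
          rw [div_mul_eq_mul_div, div_eq_iff (by positivity : (10:ℝ)^m ≠ 0), mul_assoc,
            ← pow_add]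
          congr 2
          omega
        rw [h1, ht, add_mul, h2]
    -- combine
    have hub : ∀ i : ℕ, i < N → 11 * (δ * 10^(m+N-1-i))^2 ≤ 1 := by
      intro i hi
      have h3 := hterm i hi
      have h2 : ((1:ℝ)/2)^i ≤ 1 := pow_le_one₀ (by norm_num) (by norm_num)
      have h4 : (0:ℝ) ≤ (δ * 10^(m+N-1-i))^2 := sq_nonneg _
      linarith
    have hsum : ∑ i ∈ Finset.range N, 11 * (δ * 10^(m+N-1-i))^2 ≤ 1/2 := by
      have hle : ∀ i ∈ Finset.range N,
          11 * (δ * 10^(m+N-1-i))^2 ≤ (11/10000 : ℝ) * (1/2)^i := by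
        intro i hi
        have := hterm i (Finset.mem_range.mp hi)
        linarith
      calc ∑ i ∈ Finset.range N, 11 * (δ * 10^(m+N-1-i))^2
          ≤ ∑ i ∈ Finset.range N, (11/10000 : ℝ) * (1/2)^i := Finset.sum_le_sum hle
        _ = (11/10000 : ℝ) * ∑ i ∈ Finset.range N, ((1:ℝ)/2)^i := by
            rw [Finset.mul_sum]
        _ ≤ (11/10000 : ℝ) * 2 := by
            have := sum_geometric_two_le N
            nlinarith
        _ ≤ 1/2 := by norm_num
    have hp1 := prod_one_sub_ge N (fun i => 11 * (δ * 10^(m+N-1-i))^2)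
      (fun i _ => by positivity) hub
    calc (1/2 : ℝ) ≤ 1 - ∑ i ∈ Finset.range N, 11 * (δ * 10^(m+N-1-i))^2 := by linarith
      _ ≤ ∏ i ∈ Finset.range N, (1 - 11 * (δ * 10^(m+N-1-i))^2) := hp1
      _ ≤ ∏ i ∈ Finset.range N, ‖gfun t ((10:ℝ)^(m+N) / 10^i)‖ := by
          refine Finset.prod_le_prod (fun i hi => ?_) hfac
          have := hub i (Finset.mem_range.mp hi)
          linarith
  -- chain the three stages
  have E1 : ‖ft μ ((10:ℝ)^(m+N))‖
      = (∏ i ∈ Finset.range N, ‖gfun t ((10:ℝ)^(m+N) / 10^i)‖)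
        * ‖ft μ ((10:ℝ)^m)‖ := by
    have h10 : ((10:ℝ)^(m+N)) / 10^N = 10^m := by
      rw [pow_add, mul_div_assoc, div_self (by positivity : (10:ℝ)^N ≠ 0), mul_one]
    rw [ft_iter h _ N, norm_mul, norm_prod, h10]
  have E2 : ‖ft μ ((10:ℝ)^m)‖
      = (∏ i ∈ Finset.range m, ‖gfun t ((10:ℝ)^m / 10^i)‖)
        * ‖ft μ 1‖ := by
    have h10 : ((10:ℝ)^m) / 10^m = 1 := div_self (by positivity)
    rw [ft_iter h _ m, norm_mul, norm_prod, h10]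
  have E3 : ‖ft μ (1:ℝ)‖
      = (∏ i ∈ Finset.range M, ‖gfun t ((1:ℝ) / 10^i)‖)
        * ‖ft μ (1 / 10^M)‖ := by
    rw [ft_iter h _ M, norm_mul, norm_prod]
  rw [E1, E2, E3]
  have n0 : (0:ℝ) ≤ ‖ft μ (1 / 10^M)‖ := norm_nonneg _
  have n1 : (0:ℝ) ≤ ∏ i ∈ Finset.range m, ‖gfun t ((10:ℝ)^m / 10^i)‖ :=
    Finset.prod_nonneg fun i _ => norm_nonneg _
  have n2 : (0:ℝ) ≤ ∏ i ∈ Finset.range M, ‖gfun t ((1:ℝ) / 10^i)‖ :=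
    Finset.prod_nonneg fun i _ => norm_nonneg _
  have m3 : (1/2:ℝ)^M * (1/2)
      ≤ (∏ i ∈ Finset.range M, ‖gfun t ((1:ℝ) / 10^i)‖)
        * ‖ft μ (1 / 10^M)‖ :=
    mul_le_mul P3 hM (by norm_num) n2
  have m2 : (1/3:ℝ)^m * ((1/2:ℝ)^M * (1/2))
      ≤ (∏ i ∈ Finset.range m, ‖gfun t ((10:ℝ)^m / 10^i)‖)
        * ((∏ i ∈ Finset.range M, ‖gfun t ((1:ℝ) / 10^i)‖)
          * ‖ft μ (1 / 10^M)‖) :=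
    mul_le_mul P2 m3 (by positivity) n1
  have m1 : (1/2:ℝ) * ((1/3:ℝ)^m * ((1/2:ℝ)^M * (1/2)))
      ≤ (∏ i ∈ Finset.range N, ‖gfun t ((10:ℝ)^(m+N) / 10^i)‖)
        * ((∏ i ∈ Finset.range m, ‖gfun t ((10:ℝ)^m / 10^i)‖)
          * ((∏ i ∈ Finset.range M, ‖gfun t ((1:ℝ) / 10^i)‖)
            * ‖ft μ (1 / 10^M)‖)) :=
    mul_le_mul P1 m2 (by positivity) (Finset.prod_nonneg fun i _ => norm_nonneg _)
  calc (1/2 : ℝ)^(M+2) * (1/3 : ℝ)^m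
      = (1/2:ℝ) * ((1/3:ℝ)^m * ((1/2:ℝ)^M * (1/2))) := by ring
    _ ≤ _ := m1

/-- For every `φ : [0,∞) → (0,1]` tending to `0`, there is a dense `G_δ` set `A ⊆ [0,1]`
such that for all `t ∈ A`, `limsup_{ξ→∞} |μ̂_t(ξ)| / φ(ξ) > 0`. -/
theorem stmt11 (φ : ℝ → ℝ) (hφ : ∀ ξ : ℝ, 0 ≤ ξ → φ ξ ∈ Set.Ioc (0 : ℝ) 1)
    (hφ0 : Tendsto φ atTop (nhds 0)) :
    ∃ A : Set ℝ, A ⊆ Set.Icc 0 1 ∧ IsGδ A ∧ Set.Icc (0 : ℝ) 1 ⊆ closure A ∧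
      ∀ t ∈ A, ∀ μ : Measure ℝ, IsProbabilityMeasure μ → muInv t μ →
        ∃ C > 0, ∃ᶠ ξ : ℝ in atTop, C * φ ξ ≤ ‖ft μ ξ‖ := by
  classical
  have hN : ∀ m j : ℕ, ∃ N : ℕ, j ≤ N ∧ φ ((10:ℝ)^(m+N)) ≤ (1/3 : ℝ)^m := by
    intro m j
    have hpos : (0:ℝ) < (1/3 : ℝ)^m := by positivity
    have hev : ∀ᶠ ξ : ℝ in atTop, φ ξ < (1/3 : ℝ)^m := hφ0.eventually (gt_mem_nhds hpos)
    obtain ⟨B, hB⟩ := eventually_atTop.mp hev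
    obtain ⟨n₀, hn₀⟩ := pow_unbounded_of_one_lt (R := ℝ) B (by norm_num : (1:ℝ) < 10)
    refine ⟨max j n₀, le_max_left _ _, ?_⟩
    refine (hB _ ?_).le
    calc B ≤ 10^n₀ := hn₀.le
      _ ≤ (10:ℝ)^(m + max j n₀) := pow_le_pow_right₀ (by norm_num) (by omega)
  choose Nf hNf1 hNf2 using hN
  set U : ℕ → Set ℝ := fun j =>
    ⋃ a : ℕ, ⋃ m : ℕ, Metric.ball ((a:ℝ)/10^m) ((1/10 : ℝ)^(m + Nf m j + 1)) with hU
  refine ⟨Icc 0 1 ∩ ⋂ j, U j, inter_subset_left, ?_, ?_, ?_⟩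
  · exact (isClosed_Icc.isGδ).inter (IsGδ.iInter fun j =>
      (isOpen_iUnion fun a => isOpen_iUnion fun m => Metric.isOpen_ball).isGδ)
  · -- density
    intro x hx
    rw [Metric.mem_closure_iff]
    intro ε hε
    obtain ⟨m, hm⟩ := exists_pow_lt_of_lt_one hε (show (1:ℝ)/10 < 1 by norm_num)
    set a : ℕ := (⌊x * 10^m⌋).toNat with ha
    have hx0 : 0 ≤ x := hx.1
    have hx1 : x ≤ 1 := hx.2
    have hp : (0:ℝ) < 10^m := by positivity
    have hfl0 : 0 ≤ ⌊x * 10^m⌋ := Int.floor_nonneg.mpr (by positivity)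
    have hcast : ((a:ℝ)) = ((⌊x * 10^m⌋ : ℤ) : ℝ) := by
      rw [ha]; exact_mod_cast Int.toNat_of_nonneg hfl0
    have h1 : ((⌊x*10^m⌋ : ℤ) : ℝ) ≤ x*10^m := Int.floor_le _
    have h2 : x*10^m < (⌊x*10^m⌋ : ℤ) + 1 := Int.lt_floor_add_one _
    have hpow : ((1:ℝ)/10)^m = 1/10^m := by rw [div_pow, one_pow]
    refine ⟨(a:ℝ)/10^m, ⟨⟨by positivity, ?_⟩, ?_⟩, ?_⟩
    · rw [div_le_one hp, hcast]
      nlinarith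
    · refine mem_iInter.mpr fun j => ?_
      exact mem_iUnion.mpr ⟨a, mem_iUnion.mpr ⟨m, Metric.mem_ball_self (by positivity)⟩⟩
    · rw [Real.dist_eq, abs_sub_lt_iff]
      constructor
      · have key1 : x - (a:ℝ)/10^m < (1/10 : ℝ)^m := by
          rw [hcast, hpow, sub_lt_iff_lt_add, ← add_div, lt_div_iff₀ hp]
          linarith
        linarith
      · have key2 : (a:ℝ)/10^m - x ≤ 0 := by
          rw [hcast, sub_nonpos, div_le_iff₀ hp]
          linarith
        linarith
  · -- main property
    rintro t ⟨htI, htU⟩ μ hprob hinv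
    haveI := hprob
    obtain ⟨M, hM⟩ := ft_anchor μ
    refine ⟨(1/2 : ℝ)^(M+2), by positivity, ?_⟩
    rw [frequently_atTop]
    intro b
    obtain ⟨j, hj⟩ := pow_unbounded_of_one_lt (R := ℝ) b (by norm_num : (1:ℝ) < 10)
    have htUj : t ∈ U j := mem_iInter.mp htU j
    rw [hU] at htUj
    simp only [mem_iUnion] at htUj
    obtain ⟨a, m, hball⟩ := htUj
    have hdist : |t - (a:ℝ)/10^m| ≤ (1/10 : ℝ)^(m + Nf m j + 1) := by
      rw [Metric.mem_ball, Real.dist_eq] at hball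
      exact hball.le
    have hkey := main_est htI.1 htI.2 hinv M hM a m (Nf m j) hdist
    refine ⟨(10:ℝ)^(m + Nf m j), ?_, ?_⟩
    · calc b ≤ 10^j := hj.le
        _ ≤ (10:ℝ)^(m + Nf m j) := pow_le_pow_right₀ (by norm_num)
            (by have := hNf1 m j; omega)
    · have hφle : φ ((10:ℝ)^(m + Nf m j)) ≤ (1/3 : ℝ)^m := hNf2 m j
      have hCpos : (0:ℝ) ≤ (1/2 : ℝ)^(M+2) := by positivity
      calc (1/2 : ℝ)^(M+2) * φ ((10:ℝ)^(m + Nf m j))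
          ≤ (1/2 : ℝ)^(M+2) * (1/3 : ℝ)^m := by
            exact mul_le_mul_of_nonneg_left hφle hCpos
        _ ≤ _ := hkey
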